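/- The maximally entangled state projector |φ₊^d⟩⟨φ₊^d|, where |φ₊^d⟩ = (1/√d) Σ_{j=0}^{d−1} |j⟩⊗|j⟩, equals (1/d²) 𝟙⊗𝟙 + (1/d²) Σ_{(l,m)≠(0,0)} U_{lm} ⊗ U_{(−l) mod d, m}. -/

import Mathlib

open Matrix Finset Kronecker

noncomputable def Weyl (d : ℕ) (n m : Fin d) : Matrix (Fin d) (Fin d) ℂ :=
  ∑ k : Fin d,
    Complex.exp (2 * Real.pi * Complex.I * (k : ℕ) * (n : ℕ) / d) •
      Matrix.single k (k + m) 1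

/-- The projector onto the maximally entangled state
`|φ₊⟩ = (1/√d) Σ_j |j⟩⊗|j⟩`, i.e. `(1/d) Σ_{j,k} |j⟩⟨k| ⊗ |j⟩⟨k|`. -/
noncomputable def bellProjector (d : ℕ) : Matrix (Fin d × Fin d) (Fin d × Fin d) ℂ :=
  ((1 : ℂ) / d) •
    ∑ j : Fin d, ∑ k : Fin d,
      (Matrix.single j k (1 : ℂ)) ⊗ₖ (Matrix.single j k (1 : ℂ))

lemma weyl_apply (d : ℕ) (n m a b : Fin d) :
    Weyl d n m a b = if b = a + m then Complex.exp (2 * Real.pi * Complex.I * (a:ℕ) * (n:ℕ) / d) else 0 := by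
  unfold Weyl
  rw [Matrix.sum_apply]
  simp only [Matrix.smul_apply, Matrix.single, Matrix.of_apply, smul_eq_mul, mul_ite, mul_one, mul_zero]
  rw [Finset.sum_eq_single a]
  · by_cases h : b = a + m <;> simp [h, eq_comm]
  · intro k _ hk
    simp only [ite_eq_right_iff, and_imp]
    intro h; exact absurd h hk
  · simp

lemma sum_exp (d : ℕ) [NeZero d] (a b : Fin d) :
    ∑ l : Fin d, Complex.exp (2*Real.pi*Complex.I*(a:ℕ)*(l:ℕ)/d)
        * Complex.exp (2*Real.pi*Complex.I*(b:ℕ)*(((-l : Fin d)):ℕ)/d)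
      = if a = b then (d:ℂ) else 0 := by
  have hd : (d:ℕ) ≠ 0 := NeZero.ne d
  set ζ : ℂ := Complex.exp (2*Real.pi*Complex.I/d) with hζ
  have hprim : IsPrimitiveRoot ζ d := Complex.isPrimitiveRoot_exp d hd
  have hζ0 : ζ ≠ 0 := hprim.ne_zero hd
  have hζd : ζ ^ d = 1 := hprim.pow_eq_one
  have hcong : ∀ x y : ℤ, (d:ℤ) ∣ (x - y) → ζ ^ x = ζ ^ y := by
    rintro x y ⟨t, ht⟩
    have hx : x = y + (d:ℤ) * t := by linarith
    subst hx
    rw [zpow_add₀ hζ0, _root_.zpow_mul, zpow_natCast, hζd, _root_.one_zpow, mul_one]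
  have hexp : ∀ x y : ℕ, Complex.exp (2*Real.pi*Complex.I*(x:ℂ)*(y:ℂ)/d) = ζ ^ (x*y) := by
    intro x y
    rw [hζ, ← Complex.exp_nat_mul]
    congr 1
    push_cast
    ring
  have hterm : ∀ l : Fin d,
      Complex.exp (2*Real.pi*Complex.I*(a:ℕ)*(l:ℕ)/d)
        * Complex.exp (2*Real.pi*Complex.I*(b:ℕ)*(((-l : Fin d)):ℕ)/d)
      = (ζ ^ ((a:ℤ) - (b:ℤ))) ^ (l:ℕ) := by
    intro l
    rw [hexp, hexp, ← pow_add]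
    rw [← zpow_natCast ζ, ← zpow_natCast (ζ ^ ((a:ℤ)-(b:ℤ))), ← _root_.zpow_mul]
    apply hcong
    have hneg : (((-l : Fin d)):ℕ) = (d - (l:ℕ)) % d := Fin.coe_neg l ▸ rfl
    rcases eq_or_ne l 0 with rfl | hl
    · simp [hneg, Nat.sub_self]
    · have hl0 : (l:ℕ) ≠ 0 := fun h => hl (Fin.ext (by simp [h]))
      have hld : (l:ℕ) < d := l.isLt
      have hneg' : (((-l : Fin d)):ℕ) = d - (l:ℕ) := by
        rw [hneg, Nat.mod_eq_of_lt (by omega)]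
      refine ⟨(b:ℤ), ?_⟩
      rw [hneg']
      push_cast [Nat.cast_sub hld.le]
      ring
  rw [Finset.sum_congr rfl (fun l _ => hterm l)]
  rcases eq_or_ne a b with rfl | hab
  · simp
  · rw [if_neg hab]
    set x : ℂ := ζ ^ ((a:ℤ) - (b:ℤ)) with hx
    have hx1 : x ≠ 1 := by
      rw [hx]
      intro h
      have := (hprim.zpow_eq_one_iff_dvd _).mp h
      have hz : ((a:ℕ):ℤ) - ((b:ℕ):ℤ) = 0 := by
        refine Int.eq_zero_of_abs_lt_dvd this ?_
        have h1 : (a:ℕ) < d := a.isLt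
        have h2 : (b:ℕ) < d := b.isLt
        rw [abs_lt]
        constructor <;> [push_cast; push_cast] <;> omega
      exact hab (Fin.ext (by omega))
    have hxd : x ^ d = 1 := by
      rw [hx, ← _root_.zpow_natCast (ζ ^ _), ← _root_.zpow_mul, mul_comm, _root_.zpow_mul,
        zpow_natCast, hζd, _root_.one_zpow]
    rw [Fin.sum_univ_eq_sum_range (fun l => x ^ l), geom_sum_eq hx1, hxd, sub_self, zero_div]

lemma weyl_zero_zero (d : ℕ) [NeZero d] : Weyl d 0 0 = 1 := by
  ext a b
  rw [weyl_apply]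
  rcases eq_or_ne b a with rfl | h
  · simp [Matrix.one_apply]
  · simp [Matrix.one_apply, h, Ne.symm h]

theorem bell_projector_weyl_expansion (d : ℕ) [NeZero d] :
    bellProjector d =
      ((1 : ℂ) / (d ^ 2)) • ((1 : Matrix (Fin d) (Fin d) ℂ) ⊗ₖ 1)
      + ((1 : ℂ) / (d ^ 2)) •
          ∑ l : Fin d, ∑ m : Fin d,
            (if (l, m) = ((0 : Fin d), (0 : Fin d)) then 0
             else (Weyl d l m) ⊗ₖ (Weyl d (-l) m)) := by
  have hd : (d:ℕ) ≠ 0 := NeZero.ne d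
  have hdC : (d:ℂ) ≠ 0 := Nat.cast_ne_zero.mpr hd
  set g : Fin d → Fin d → Matrix (Fin d × Fin d) (Fin d × Fin d) ℂ :=
    fun l m => (Weyl d l m) ⊗ₖ (Weyl d (-l) m) with hg
  have hsplit : (∑ l : Fin d, ∑ m : Fin d,
      (if (l, m) = ((0 : Fin d), (0 : Fin d)) then 0 else g l m))
      = (∑ l : Fin d, ∑ m : Fin d, g l m) - g 0 0 := by
    have h1 : ∀ l m : Fin d,
        (if (l, m) = ((0 : Fin d), (0 : Fin d)) then (0 : Matrix (Fin d × Fin d) (Fin d × Fin d) ℂ) else g l m)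
        = g l m - (if (l, m) = ((0 : Fin d), (0 : Fin d)) then g 0 0 else 0) := by
      intro l m
      rcases eq_or_ne (l, m) ((0 : Fin d), (0 : Fin d)) with h | h
      · rw [if_pos h, if_pos h]
        obtain ⟨h1, h2⟩ := Prod.mk.injEq .. ▸ h
        subst h1; subst h2; simp
      · rw [if_neg h, if_neg h, sub_zero]
    simp only [h1, Finset.sum_sub_distrib]
    congr 1
    rw [← Finset.sum_product']
    simp
  have h00 : g 0 0 = (1 : Matrix (Fin d) (Fin d) ℂ) ⊗ₖ 1 := by
    rw [hg]; simp only [neg_zero, weyl_zero_zero]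
  have key : bellProjector d
      = ((1 : ℂ) / (d ^ 2)) • ∑ l : Fin d, ∑ m : Fin d, g l m := by
    ext ⟨a, b⟩ ⟨c, e⟩
    rw [bellProjector, Matrix.smul_apply, Matrix.smul_apply, Matrix.sum_apply, Matrix.sum_apply]
    simp only [Matrix.sum_apply, Matrix.kroneckerMap_apply, hg, weyl_apply,
      Matrix.single, Matrix.of_apply]
    have hL : ∑ j : Fin d, ∑ k : Fin d,
        ((if j = a ∧ k = c then (1:ℂ) else 0) * (if j = b ∧ k = e then (1:ℂ) else 0))
        = if a = b ∧ c = e then 1 else 0 := by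
      simp only [ite_and, ite_mul, one_mul, zero_mul]
      rw [Finset.sum_eq_single a]
      · rw [Finset.sum_eq_single c]
        · by_cases h1 : a = b <;> by_cases h2 : c = e <;> simp [h1, h2]
        · intro k _ hk; simp [hk]
        · simp
      · intro j _ hj
        simp [hj]
      · simp
    rw [hL]
    have hR : ∀ l : Fin d, (∑ m : Fin d,
        (if c = a + m then Complex.exp (2 * Real.pi * Complex.I * (a:ℕ) * (l:ℕ) / d) else 0)
        * (if e = b + m then Complex.exp (2 * Real.pi * Complex.I * (b:ℕ) * (((-l : Fin d)):ℕ) / d) else 0))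
        = if e = b + (c - a) then
            Complex.exp (2 * Real.pi * Complex.I * (a:ℕ) * (l:ℕ) / d)
            * Complex.exp (2 * Real.pi * Complex.I * (b:ℕ) * (((-l : Fin d)):ℕ) / d)
          else 0 := by
      intro l
      rw [Finset.sum_eq_single (c - a)]
      · rw [if_pos (show c = a + (c - a) by abel)]
        by_cases h : e = b + (c - a) <;> simp [h]
      · intro m _ hm
        rw [if_neg, zero_mul]
        intro h
        exact hm (by rw [h]; abel)
      · simp
    rw [Finset.sum_congr rfl (fun l _ => hR l)]
    by_cases hP : e = b + (c - a)
    · simp only [if_pos hP]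
      rw [sum_exp d a b]
      rcases eq_or_ne a b with rfl | hab
      · have hce : c = e := by rw [hP]; abel
        rw [if_pos rfl, if_pos ⟨rfl, hce⟩]
        field_simp
        simp only [smul_eq_mul]
        rw [mul_one, one_div, one_div, sq, mul_inv, mul_assoc, inv_mul_cancel₀ hdC, mul_one]
      · rw [if_neg hab, if_neg (fun h => hab h.1)]
        simp
    · simp only [if_neg hP, Finset.sum_const_zero]
      rw [if_neg]
      · simp
      rintro ⟨rfl, rfl⟩
      exact hP (by abel)
  rw [key, hsplit]
  rw [← h00, smul_sub, add_sub_cancel]
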